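/- For n ≥ 3, the n×n matrix S_n = 1 ⊕ (J_{n−1} − H_{n−1}) (a single 1 in the top-left corner, zeros in the rest of the first row and column, and all-ones minus the anti-diagonal identity in the remaining (n−1)×(n−1) block) is strongly I_3-forcing and has exactly n² − 3n + 3 ones; hence M(n, I_3) ≥ n² − 3n + 3. -/

import Mathlib

open Finset

/-- Number of 1-entries of a (0,1)-matrix. -/
def onesCount {m n : ℕ} (A : Fin m → Fin n → Bool) : ℕ :=
  (Finset.univ.filter (fun p : Fin m × Fin n => A p.1 p.2 = true)).card

/-- Number of 0-entries of a (0,1)-matrix. -/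
def zerosCount {m n : ℕ} (A : Fin m → Fin n → Bool) : ℕ :=
  (Finset.univ.filter (fun p : Fin m × Fin n => A p.1 p.2 = false)).card

/-- `A` is `Q`-forcing: every s×t submatrix of `A` is entrywise ≥ Q. -/
def IsForcing {m n s t : ℕ} (A : Fin m → Fin n → Bool) (Q : Fin s → Fin t → Bool) : Prop :=
  ∀ (r : Fin s → Fin m) (c : Fin t → Fin n), StrictMono r → StrictMono c →
    ∀ y x, Q y x = true → A (r y) (c x) = true

/-- Minimum number of 1-entries of an m×n Q-forcing matrix. -/
noncomputable def mMin (m n : ℕ) {s t : ℕ} (Q : Fin s → Fin t → Bool) : ℕ :=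
  sInf {v | ∃ A : Fin m → Fin n → Bool, IsForcing A Q ∧ onesCount A = v}

/-- `A` is strongly `Q`-forcing: every 1-entry lies in a submatrix exactly equal to `Q`. -/
def IsStronglyForcing {m n s t : ℕ} (A : Fin m → Fin n → Bool)
    (Q : Fin s → Fin t → Bool) : Prop :=
  ∀ i j, A i j = true → ∃ (r : Fin s → Fin m) (c : Fin t → Fin n),
    StrictMono r ∧ StrictMono c ∧ (∀ y x, A (r y) (c x) = Q y x) ∧
    ∃ y x, r y = i ∧ c x = j

/-- Maximum number of 1-entries of an m×n strongly Q-forcing matrix. -/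
noncomputable def MMax (m n : ℕ) {s t : ℕ} (Q : Fin s → Fin t → Bool) : ℕ :=
  sSup {v | ∃ A : Fin m → Fin n → Bool, IsStronglyForcing A Q ∧ onesCount A = v}

/-- Corner sets of 0-positions with no 1-entry weakly in the given quadrant direction. -/
def cornerNW {s t : ℕ} (Q : Fin s → Fin t → Bool) : Finset (Fin s × Fin t) :=
  Finset.univ.filter (fun p => ∀ i' j', i' ≤ p.1 → j' ≤ p.2 → Q i' j' = false)

def cornerNE {s t : ℕ} (Q : Fin s → Fin t → Bool) : Finset (Fin s × Fin t) :=
  Finset.univ.filter (fun p => ∀ i' j', i' ≤ p.1 → p.2 ≤ j' → Q i' j' = false)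

def cornerSW {s t : ℕ} (Q : Fin s → Fin t → Bool) : Finset (Fin s × Fin t) :=
  Finset.univ.filter (fun p => ∀ i' j', p.1 ≤ i' → j' ≤ p.2 → Q i' j' = false)

def cornerSE {s t : ℕ} (Q : Fin s → Fin t → Bool) : Finset (Fin s × Fin t) :=
  Finset.univ.filter (fun p => ∀ i' j', p.1 ≤ i' → p.2 ≤ j' → Q i' j' = false)

/-- `P` is a permutation matrix. -/
def IsPermMatrix {k : ℕ} (P : Fin k → Fin k → Bool) : Prop :=
  ∃ σ : Equiv.Perm (Fin k), ∀ i j, P i j = decide (σ i = j)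

/-- The matrix S_n. -/
def Sf (n : ℕ) : Fin n → Fin n → Bool :=
  fun (i j : Fin n) =>
    decide (((i : ℕ) = 0 ∧ (j : ℕ) = 0) ∨
      ((i : ℕ) ≠ 0 ∧ (j : ℕ) ≠ 0 ∧ (i : ℕ) + (j : ℕ) ≠ n))

lemma strictMono_vec3 {n : ℕ} {a b c : Fin n} (h1 : a < b) (h2 : b < c) :
    StrictMono ![a, b, c] := by
  have h3 := h1.trans h2
  intro x y hxy
  fin_cases x <;> fin_cases y <;> simp_all

lemma Sf_strong {n : ℕ} (hn : 3 ≤ n) :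
    IsStronglyForcing (Sf n) (fun (i j : Fin 3) => decide (i = j)) := by
  intro i j hij
  have hin := i.isLt
  have hjn := j.isLt
  have h : ((i : ℕ) = 0 ∧ (j : ℕ) = 0) ∨
      ((i : ℕ) ≠ 0 ∧ (j : ℕ) ≠ 0 ∧ (i : ℕ) + (j : ℕ) ≠ n) := of_decide_eq_true hij
  rcases h with ⟨hi0, hj0⟩ | ⟨hi, hj, hs⟩
  · -- corner case: (0,0); use rows/cols 0,1,n-1
    refine ⟨![⟨0, by omega⟩, ⟨1, by omega⟩, ⟨n - 1, by omega⟩],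
      ![⟨0, by omega⟩, ⟨1, by omega⟩, ⟨n - 1, by omega⟩], ?_, ?_, ?_, 0, 0, ?_, ?_⟩
    · exact strictMono_vec3 (by simp [Fin.lt_def]) (by simp only [Fin.lt_def]; omega)
    · exact strictMono_vec3 (by simp [Fin.lt_def]) (by simp only [Fin.lt_def]; omega)
    · intro y x
      fin_cases y <;> fin_cases x <;>
        simp [Sf, Fin.ext_iff, decide_eq_decide] <;> omega
    · exact Fin.ext (by simp [hi0])
    · exact Fin.ext (by simp [hj0])
  · rcases lt_or_gt_of_ne hs with hlt | hgt
    · -- i + j < n : rows 0, i, n-j ; cols 0, j, n-i ; (i,j) at (1,1)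
      refine ⟨![⟨0, by omega⟩, i, ⟨n - (j : ℕ), by omega⟩],
        ![⟨0, by omega⟩, j, ⟨n - (i : ℕ), by omega⟩], ?_, ?_, ?_, 1, 1, ?_, ?_⟩
      · exact strictMono_vec3 (by simp only [Fin.lt_def]; omega) (by simp only [Fin.lt_def]; omega)
      · exact strictMono_vec3 (by simp only [Fin.lt_def]; omega) (by simp only [Fin.lt_def]; omega)
      · intro y x
        fin_cases y <;> fin_cases x <;>
          simp [Sf, Fin.ext_iff, decide_eq_decide] <;> (try omega)
        all_goals (apply decide_eq_true; omega)
      · rfl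
      · rfl
    · -- i + j > n : rows 0, n-j, i ; cols 0, n-i, j ; (i,j) at (2,2)
      refine ⟨![⟨0, by omega⟩, ⟨n - (j : ℕ), by omega⟩, i],
        ![⟨0, by omega⟩, ⟨n - (i : ℕ), by omega⟩, j], ?_, ?_, ?_, 2, 2, ?_, ?_⟩
      · exact strictMono_vec3 (by simp only [Fin.lt_def]; omega) (by simp only [Fin.lt_def]; omega)
      · exact strictMono_vec3 (by simp only [Fin.lt_def]; omega) (by simp only [Fin.lt_def]; omega)
      · intro y x
        fin_cases y <;> fin_cases x <;>
          simp [Sf, Fin.ext_iff, decide_eq_decide] <;> (try omega)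
        all_goals (apply decide_eq_true; omega)
      · rfl
      · rfl

lemma Sf_count {n : ℕ} (hn : 3 ≤ n) : onesCount (Sf n) = n ^ 2 - 3 * n + 3 := by
  have h0n : 0 < n := by omega
  have key : ∀ i : Fin n,
      (Finset.univ.filter (fun j : Fin n => Sf n i j = true)).card =
        if (i : ℕ) = 0 then 1 else n - 2 := by
    intro i
    by_cases hi : (i : ℕ) = 0
    · rw [if_pos hi]
      have : (Finset.univ.filter (fun j : Fin n => Sf n i j = true)) =
          {(⟨0, h0n⟩ : Fin n)} := by
        ext j
        simp [Sf, Fin.ext_iff, hi]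
      rw [this, Finset.card_singleton]
    · rw [if_neg hi]
      have hin := i.isLt
      have : (Finset.univ.filter (fun j : Fin n => Sf n i j = true)) =
          Finset.univ \ {(⟨0, h0n⟩ : Fin n), (⟨n - (i : ℕ), by omega⟩ : Fin n)} := by
        ext j
        have hjn := j.isLt
        simp [Sf, Fin.ext_iff, hi]
        omega
      rw [this, Finset.card_sdiff_of_subset (Finset.subset_univ _)]
      rw [Finset.card_pair (by simp [Fin.ext_iff]; omega)]
      simp
  have hsum : onesCount (Sf n) = ∑ i : Fin n, if (i : ℕ) = 0 then 1 else n - 2 := by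
    unfold onesCount
    rw [Finset.card_filter, Fintype.sum_prod_type]
    refine Finset.sum_congr rfl fun i _ => ?_
    rw [← Finset.card_filter, key i]
  rw [hsum, Finset.sum_ite]
  rw [Finset.sum_const, Finset.sum_const, smul_eq_mul, smul_eq_mul]
  have h1 : (Finset.univ.filter (fun i : Fin n => (i : ℕ) = 0)) = {(⟨0, h0n⟩ : Fin n)} := by
    ext i; simp [Fin.ext_iff]
  have h2 : (Finset.univ.filter (fun i : Fin n => ¬ (i : ℕ) = 0)) =
      Finset.univ \ {(⟨0, h0n⟩ : Fin n)} := by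
    ext i; simp [Fin.ext_iff]
  rw [h1, h2, Finset.card_singleton, Finset.card_sdiff_of_subset (Finset.subset_univ _)]
  simp only [Finset.card_singleton, Finset.card_univ, Fintype.card_fin]
  obtain ⟨m, rfl⟩ : ∃ m, n = m + 3 := ⟨n - 3, by omega⟩
  have e1 : (m + 3) ^ 2 = m * m + 6 * m + 9 := by ring
  have e2 : m + 3 - 1 = m + 2 := by omega
  have e3 : m + 3 - 2 = m + 1 := by omega
  rw [e2, e3]
  have e4 : (m + 2) * (m + 1) = m * m + 3 * m + 2 := by ring
  omega

theorem stmt17 (n : ℕ) (hn : 3 ≤ n) :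
    IsStronglyForcing
      (fun (i j : Fin n) =>
        decide (((i : ℕ) = 0 ∧ (j : ℕ) = 0) ∨
          ((i : ℕ) ≠ 0 ∧ (j : ℕ) ≠ 0 ∧ (i : ℕ) + (j : ℕ) ≠ n)))
      (fun (i j : Fin 3) => decide (i = j)) ∧
    onesCount
      (fun (i j : Fin n) =>
        decide (((i : ℕ) = 0 ∧ (j : ℕ) = 0) ∨
          ((i : ℕ) ≠ 0 ∧ (j : ℕ) ≠ 0 ∧ (i : ℕ) + (j : ℕ) ≠ n))) = n ^ 2 - 3 * n + 3 ∧
    n ^ 2 - 3 * n + 3 ≤ MMax n n (fun (i j : Fin 3) => decide (i = j)) := by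
  refine ⟨Sf_strong hn, Sf_count hn, ?_⟩
  have hmem : n ^ 2 - 3 * n + 3 ∈
      {v | ∃ A : Fin n → Fin n → Bool,
        IsStronglyForcing A (fun (i j : Fin 3) => decide (i = j)) ∧ onesCount A = v} :=
    ⟨Sf n, Sf_strong hn, Sf_count hn⟩
  have hbdd : BddAbove {v | ∃ A : Fin n → Fin n → Bool,
      IsStronglyForcing A (fun (i j : Fin 3) => decide (i = j)) ∧ onesCount A = v} := by
    refine ⟨n * n, fun v hv => ?_⟩
    obtain ⟨A, -, hA⟩ := hv
    calc v = onesCount A := hA.symm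
      _ ≤ (Finset.univ : Finset (Fin n × Fin n)).card := Finset.card_filter_le _ _
      _ = n * n := by simp
  exact le_csSup hbdd hmem
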